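/- (Remark 4.4, membership criterion.) Let n ≥ 1, 1 ≤ p < ∞, 0 ≤ λ ≤ 1, let ν > −n be real, a ∈ ℝⁿ, x₀ ∈ ℝⁿ, r₀ > 0, and suppose a ∈ B(x₀,r₀). Let w(y) = |y − a|^{ν}. Then χ_{B(x₀,r₀)} belongs to L^{p,λ}(ℝⁿ,w) (i.e. ‖χ_{B(x₀,r₀)}‖_{p,λ;w} < ∞) if and only if ν ≥ nλ − n. -/

import Mathlib

open MeasureTheory

/-- The weighted Morrey norm on `ℝⁿ`: supremum over all balls `B(x,r)` of
`( |B(x,r)|^{-λ} ∫_{B(x,r)} |f|^p w )^{1/p}`, with values in `[0,∞]`. -/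
noncomputable def morreyNorm {n : ℕ} (p lam : ℝ)
    (w f : EuclideanSpace ℝ (Fin n) → ℝ) : ENNReal :=
  ⨆ (x : EuclideanSpace ℝ (Fin n)) (r : ℝ) (_ : 0 < r),
    ((volume (Metric.ball x r)) ^ (-lam) *
      ∫⁻ y in Metric.ball x r, ENNReal.ofReal (|f y| ^ p * w y)) ^ (1 / p)

section auxiliary

open Metric Set

/-- Unit-ball integral of the weight `‖y‖^ν` on `ℝⁿ`. -/
noncomputable def I1 (n : ℕ) (ν : ℝ) : ENNReal :=
  ∫⁻ y in Metric.ball (0 : EuclideanSpace ℝ (Fin n)) 1, ENNReal.ofReal (‖y‖ ^ ν)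

variable {n : ℕ}

local notation "E" => EuclideanSpace ℝ (Fin n)

lemma nontriv (hn : 1 ≤ n) : Nontrivial (EuclideanSpace ℝ (Fin n)) := by
  have : Nonempty (Fin n) := ⟨⟨0, hn⟩⟩
  infer_instance

lemma vol_ball (hn : 1 ≤ n) (x : EuclideanSpace ℝ (Fin n)) {r : ℝ} (hr : 0 ≤ r) :
    volume (Metric.ball x r)
      = ENNReal.ofReal (r ^ (n : ℝ)) * volume (Metric.ball (0 : EuclideanSpace ℝ (Fin n)) 1) := by
  have := nontriv hn
  rw [Measure.addHaar_ball _ x hr, finrank_euclideanSpace_fin, Real.rpow_natCast]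

lemma pow_bound {r r₀ s : ℝ} (hr : 0 < r) (hrr : r < r₀) (hs : 0 ≤ s) :
    r ^ s ≤ max 1 (r₀ ^ s) := by
  rcases le_or_gt r 1 with h | h
  · exact le_max_of_le_left (Real.rpow_le_one hr.le h hs)
  · exact le_max_of_le_right (Real.rpow_le_rpow hr.le hrr.le hs)

lemma alg1 (n : ℕ) {r : ℝ} (hr : 0 < r) (lam s : ℝ) {v : ENNReal} (hvt : v ≠ ⊤) (c : ENNReal) :
    (ENNReal.ofReal (r ^ (n:ℝ)) * v) ^ (-lam) * (ENNReal.ofReal (r ^ s) * c)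
      = ENNReal.ofReal (r ^ (s - (n:ℝ)*lam)) * (v ^ (-lam) * c) := by
  rw [ENNReal.mul_rpow_of_ne_top ENNReal.ofReal_ne_top hvt,
    ENNReal.ofReal_rpow_of_pos (Real.rpow_pos_of_pos hr _),
    ← Real.rpow_mul hr.le, mul_mul_mul_comm,
    ← ENNReal.ofReal_mul (Real.rpow_nonneg hr.le _), ← Real.rpow_add hr,
    show (n:ℝ)*(-lam) + s = s - (n:ℝ)*lam by ring]

lemma rpow_neg_ne_top {v : ENNReal} (hv0 : v ≠ 0) (hvt : v ≠ ⊤) (lam : ℝ) :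
    v ^ (-lam) ≠ ⊤ := by
  rw [ENNReal.rpow_neg, Ne, ENNReal.inv_eq_top]
  exact (ENNReal.rpow_pos (pos_iff_ne_zero.2 hv0) hvt).ne'

lemma lint_ball_scale (ν : ℝ) (a : EuclideanSpace ℝ (Fin n)) {R : ℝ} (hR : 0 < R) :
    (∫⁻ y in Metric.ball a R, ENNReal.ofReal (‖y - a‖ ^ ν))
      = ENNReal.ofReal (R ^ ((n : ℝ) + ν)) * I1 n ν := by
  have hWmeas : Measurable fun y : E => ENNReal.ofReal (‖y‖ ^ ν) :=
    (measurable_norm.pow measurable_const).ennreal_ofReal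
  -- translation
  have htrans : (∫⁻ y in Metric.ball a R, ENNReal.ofReal (‖y - a‖ ^ ν))
      = ∫⁻ z in Metric.ball (0 : E) R, ENNReal.ofReal (‖z‖ ^ ν) := by
    have hmp : MeasurePreserving (fun z : E => z + a) volume volume :=
      measurePreserving_add_right volume a
    have hemb : MeasurableEmbedding (fun z : E => z + a) :=
      (MeasurableEquiv.addRight a).measurableEmbedding
    have h := hmp.setLIntegral_comp_preimage_emb hemb
      (fun y => ENNReal.ofReal (‖y - a‖ ^ ν)) (Metric.ball a R)
    have hpre : (fun z : E => z + a) ⁻¹' Metric.ball a R = Metric.ball (0 : E) R := by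
      ext z
      simp [Metric.mem_ball, dist_eq_norm, add_sub_cancel_right]
    rw [hpre] at h
    rw [← h]
    simp [add_sub_cancel_right]
  rw [htrans]
  -- scaling
  have hmap : Measure.map (fun x : E => R • x) (volume : Measure E)
      = ENNReal.ofReal (|(R ^ n)⁻¹|) • (volume : Measure E) := by
    have h := Measure.map_addHaar_smul (volume : Measure E) (ne_of_gt hR)
    rwa [finrank_euclideanSpace_fin] at h
  set c : ENNReal := ENNReal.ofReal (|(R ^ n)⁻¹|) with hc
  have hRn : (0:ℝ) < R ^ n := pow_pos hR n
  have hc0 : c ≠ 0 := by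
    have : (0:ℝ) < |(R ^ n)⁻¹| := by positivity
    exact (ENNReal.ofReal_pos.2 this).ne'
  have hct : c ≠ ⊤ := ENNReal.ofReal_ne_top
  have hind : ∀ x : E, (Metric.ball (0:E) R).indicator (fun z => ENNReal.ofReal (‖z‖ ^ ν)) (R • x)
      = (Metric.ball (0:E) 1).indicator (fun z => ENNReal.ofReal (R ^ ν * ‖z‖ ^ ν)) x := by
    intro x
    have hnorm : ‖R • x‖ = R * ‖x‖ := by
      rw [norm_smul, Real.norm_eq_abs, abs_of_pos hR]
    by_cases hx : x ∈ Metric.ball (0:E) 1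
    · have hx1 : ‖x‖ < 1 := by simpa [Metric.mem_ball, dist_zero_right] using hx
      have hmem : R • x ∈ Metric.ball (0:E) R := by
        simp only [Metric.mem_ball, dist_zero_right, hnorm]
        nlinarith
      rw [Set.indicator_of_mem hmem, Set.indicator_of_mem hx, hnorm,
        Real.mul_rpow hR.le (norm_nonneg x)]
    · have hx1 : ¬ ‖x‖ < 1 := by simpa [Metric.mem_ball, dist_zero_right] using hx
      have hmem : R • x ∉ Metric.ball (0:E) R := by
        simp only [Metric.mem_ball, dist_zero_right, hnorm]
        push_neg at hx1 ⊢
        nlinarith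
      rw [Set.indicator_of_notMem hmem, Set.indicator_of_notMem hx]
  have key : c * ∫⁻ z in Metric.ball (0:E) R, ENNReal.ofReal (‖z‖ ^ ν)
      = ENNReal.ofReal (R ^ ν) * I1 n ν := by
    have h1 : (∫⁻ z in Metric.ball (0:E) R, ENNReal.ofReal (‖z‖ ^ ν))
        = ∫⁻ z, (Metric.ball (0:E) R).indicator (fun z => ENNReal.ofReal (‖z‖ ^ ν)) z := by
      rw [lintegral_indicator measurableSet_ball]
    rw [h1, ← smul_eq_mul, ← lintegral_smul_measure, ← hmap,
      lintegral_map (hWmeas.indicator measurableSet_ball) (measurable_const_smul R)]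
    simp only [hind]
    rw [lintegral_indicator measurableSet_ball]
    simp only [ENNReal.ofReal_mul (Real.rpow_nonneg hR.le ν)]
    rw [lintegral_const_mul _ hWmeas]
    rfl
  have hcinv : c⁻¹ = ENNReal.ofReal (R ^ n) := by
    rw [hc, abs_of_pos (inv_pos.2 hRn), ← ENNReal.ofReal_inv_of_pos (inv_pos.2 hRn), inv_inv]
  calc (∫⁻ z in Metric.ball (0:E) R, ENNReal.ofReal (‖z‖ ^ ν))
      = c⁻¹ * (c * ∫⁻ z in Metric.ball (0:E) R, ENNReal.ofReal (‖z‖ ^ ν)) := by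
        rw [← mul_assoc, ENNReal.inv_mul_cancel hc0 hct, one_mul]
    _ = c⁻¹ * (ENNReal.ofReal (R ^ ν) * I1 n ν) := by rw [key]
    _ = ENNReal.ofReal (R ^ ((n : ℝ) + ν)) * I1 n ν := by
        rw [hcinv, ← mul_assoc, ← ENNReal.ofReal_mul (pow_nonneg hR.le n)]
        congr 2
        rw [Real.rpow_add hR, Real.rpow_natCast]

lemma I1_lt_top (hn : 1 ≤ n) {ν : ℝ} (hν : -(n:ℝ) < ν) : I1 n ν < ⊤ := by
  haveI := nontriv hn
  have hWmeas : Measurable fun y : E => ENNReal.ofReal (‖y‖ ^ ν) :=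
    (measurable_norm.pow measurable_const).ennreal_ofReal
  rcases le_or_gt 0 ν with hν0 | hν0
  · -- bounded by 1 on the unit ball
    have hb : (I1 n ν) ≤ ∫⁻ _ in Metric.ball (0:E) 1, (1:ENNReal) := by
      refine setLIntegral_mono measurable_const fun y hy => ?_
      have : ‖y‖ < 1 := by simpa [Metric.mem_ball, dist_zero_right] using hy
      have : ‖y‖ ^ ν ≤ 1 := Real.rpow_le_one (norm_nonneg y) this.le hν0
      simpa using ENNReal.ofReal_le_ofReal this
    refine lt_of_le_of_lt hb ?_
    rw [setLIntegral_const]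
    simpa using measure_ball_lt_top
  · -- dyadic decomposition
    set q : ℝ := 2⁻¹ with hqdef
    have hq0 : (0:ℝ) < q := by norm_num
    have hq1 : q < 1 := by norm_num
    set A : ℕ → Set (EuclideanSpace ℝ (Fin n)) :=
      fun k => Metric.ball (0:E) (q ^ k) \ Metric.ball (0:E) (q ^ (k+1)) with hA
    have hcover : Metric.ball (0:E) 1 \ {0} ⊆ ⋃ k : ℕ, A k := by
      intro z hz
      have ht0 : 0 < ‖z‖ := by
        simp only [norm_pos_iff]
        simpa using hz.2
      have ht1 : ‖z‖ < 1 := by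
        have := hz.1; simpa [Metric.mem_ball, dist_zero_right] using this
      have hex : ∃ k : ℕ, q ^ (k+1) ≤ ‖z‖ := by
        obtain ⟨m, hm⟩ := exists_pow_lt_of_lt_one ht0 hq1
        exact ⟨m, by
          have : q ^ (m+1) ≤ q ^ m := pow_le_pow_of_le_one hq0.le hq1.le (by omega)
          linarith⟩
      classical
      set k := Nat.find hex with hk
      have hk2 : q ^ (k+1) ≤ ‖z‖ := Nat.find_spec hex
      have hk1 : ‖z‖ < q ^ k := by
        rcases Nat.eq_zero_or_pos k with h0 | h0
        · rw [h0]; simpa using ht1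
        · have hlt : k - 1 < k := by omega
          have := Nat.find_min hex (m := k - 1) (by omega)
          push_neg at this
          have hk1e : k - 1 + 1 = k := by omega
          rwa [hk1e] at this
      refine mem_iUnion.2 ⟨k, ?_, ?_⟩
      · simpa [Metric.mem_ball, dist_zero_right] using hk1
      · simp only [Metric.mem_ball, dist_zero_right]
        push_neg
        exact hk2
    set v := volume (Metric.ball (0:E) 1) with hv
    have hAk : ∀ k : ℕ, (∫⁻ y in A k, ENNReal.ofReal (‖y‖ ^ ν))
        ≤ (ENNReal.ofReal (q ^ ν) * v) * (ENNReal.ofReal (q ^ ((n:ℝ) + ν))) ^ k := by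
      intro k
      have hqk : (0:ℝ) < q ^ (k+1) := pow_pos hq0 _
      have hbound : ∀ y ∈ A k, ENNReal.ofReal (‖y‖ ^ ν)
          ≤ ENNReal.ofReal ((q ^ (k+1)) ^ ν) := by
        intro y hy
        have h1 : q ^ (k+1) ≤ ‖y‖ := by
          have := hy.2
          simp only [Metric.mem_ball, dist_zero_right, not_lt] at this
          exact this
        exact ENNReal.ofReal_le_ofReal
          (Real.rpow_le_rpow_of_nonpos hqk h1 hν0.le)
      calc (∫⁻ y in A k, ENNReal.ofReal (‖y‖ ^ ν))
          ≤ ∫⁻ _ in A k, ENNReal.ofReal ((q ^ (k+1)) ^ ν) :=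
            setLIntegral_mono measurable_const hbound
        _ = ENNReal.ofReal ((q ^ (k+1)) ^ ν) * volume (A k) := setLIntegral_const _ _
        _ ≤ ENNReal.ofReal ((q ^ (k+1)) ^ ν) * (ENNReal.ofReal ((q ^ k) ^ (n:ℝ)) * v) := by
            gcongr
            rw [← vol_ball hn 0 (pow_nonneg hq0.le k)]
            exact measure_mono (diff_subset)
        _ = ENNReal.ofReal ((q ^ (k+1)) ^ ν * (q ^ k) ^ (n:ℝ)) * v := by
            rw [← mul_assoc, ← ENNReal.ofReal_mul (Real.rpow_nonneg (pow_nonneg hq0.le _) _)]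
        _ = ENNReal.ofReal (q ^ ν * (q ^ ((n:ℝ) + ν)) ^ k) * v := by
            congr 2
            rw [← Real.rpow_natCast q (k+1), ← Real.rpow_natCast q k,
              ← Real.rpow_mul hq0.le, ← Real.rpow_mul hq0.le,
              ← Real.rpow_natCast (q ^ ((n:ℝ) + ν)) k, ← Real.rpow_mul hq0.le,
              ← Real.rpow_add hq0, ← Real.rpow_add hq0]
            congr 1
            push_cast
            ring
        _ = (ENNReal.ofReal (q ^ ν) * v) * (ENNReal.ofReal (q ^ ((n:ℝ) + ν))) ^ k := by
            rw [ENNReal.ofReal_mul (Real.rpow_nonneg hq0.le _),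
              ENNReal.ofReal_pow (Real.rpow_nonneg hq0.le _)]
            ring
    have hmain : I1 n ν ≤ ∑' k : ℕ, (ENNReal.ofReal (q ^ ν) * v) * (ENNReal.ofReal (q ^ ((n:ℝ) + ν))) ^ k := by
      have h0 : I1 n ν = ∫⁻ y in Metric.ball (0:E) 1 \ {0}, ENNReal.ofReal (‖y‖ ^ ν) := by
        rw [I1]
        congr 1
        exact (Measure.restrict_congr_set (diff_null_ae_eq_self (measure_singleton 0)).symm)
      rw [h0]
      refine le_trans (lintegral_mono_set hcover) ?_
      refine le_trans (lintegral_iUnion_le _ _) ?_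
      exact ENNReal.tsum_le_tsum hAk
    refine lt_of_le_of_lt hmain ?_
    rw [ENNReal.tsum_mul_left, ENNReal.tsum_geometric]
    refine ENNReal.mul_lt_top ?_ ?_
    · exact ENNReal.mul_lt_top ENNReal.ofReal_lt_top measure_ball_lt_top
    · rw [ENNReal.inv_lt_top]
      rw [tsub_pos_iff_lt]
      rw [← ENNReal.ofReal_one]
      apply ENNReal.ofReal_lt_ofReal_iff_of_nonneg (Real.rpow_nonneg hq0.le _) |>.2
      exact Real.rpow_lt_one hq0.le hq1 (by linarith)

lemma I1_pos (hn : 1 ≤ n) (ν : ℝ) : 0 < I1 n ν := by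
  have := nontriv hn
  have hWmeas : Measurable fun y : E => ENNReal.ofReal (‖y‖ ^ ν) :=
    (measurable_norm.pow measurable_const).ennreal_ofReal
  rw [I1, lintegral_pos_iff_support hWmeas]
  have hsub : Metric.ball (0:E) 1 \ {0} ⊆ Function.support fun y : E => ENNReal.ofReal (‖y‖ ^ ν) := by
    intro y hy
    have hy0 : y ≠ 0 := by simpa using hy.2
    have : (0:ℝ) < ‖y‖ ^ ν := Real.rpow_pos_of_pos (norm_pos_iff.2 hy0) ν
    simp [Function.mem_support, (ENNReal.ofReal_pos.2 this).ne']
  refine lt_of_lt_of_le ?_ (measure_mono hsub)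
  rw [Measure.restrict_apply₀']
  · have heq : (Metric.ball (0:E) 1 \ {0}) ∩ Metric.ball (0:E) 1 = Metric.ball (0:E) 1 \ {0} := by
      rw [inter_eq_left]; exact diff_subset
    rw [heq, measure_diff_null (measure_singleton 0)]
    exact measure_ball_pos volume 0 one_pos
  · exact measurableSet_ball.nullMeasurableSet

end auxiliary

open Metric Set

/-- Remark 4.4 (membership criterion): for `w(y) = |y-a|^ν` with `ν > -n` and
`a ∈ B(x₀,r₀)`, one has `χ_{B(x₀,r₀)} ∈ L^{p,λ}(ℝⁿ,w)` iff `ν ≥ nλ - n`. -/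
theorem stmt12 (n : ℕ) (hn : 1 ≤ n) (p lam : ℝ) (hp : 1 ≤ p)
    (hlam0 : 0 ≤ lam) (hlam1 : lam ≤ 1)
    (ν : ℝ) (hν : -(n : ℝ) < ν)
    (a x₀ : EuclideanSpace ℝ (Fin n)) (r₀ : ℝ) (hr₀ : 0 < r₀)
    (ha : a ∈ Metric.ball x₀ r₀) :
    morreyNorm p lam (fun y => ‖y - a‖ ^ ν) ((Metric.ball x₀ r₀).indicator 1) < ⊤ ↔
      (n : ℝ) * lam - n ≤ ν := by
  classical
  haveI := nontriv hn
  set W : EuclideanSpace ℝ (Fin n) → ENNReal := fun y => ENNReal.ofReal (‖y - a‖ ^ ν) with hWdef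
  set v := volume (Metric.ball (0 : EuclideanSpace ℝ (Fin n)) 1) with hvdef
  have hv0 : v ≠ 0 := (measure_ball_pos volume 0 one_pos).ne'
  have hvt : v ≠ ⊤ := measure_ball_lt_top.ne
  have hp0 : (0:ℝ) < p := lt_of_lt_of_le one_pos hp
  have hI1t : I1 n ν ≠ ⊤ := (I1_lt_top hn hν).ne
  have hI10 : I1 n ν ≠ 0 := (I1_pos hn ν).ne'
  have hax₀ : dist a x₀ < r₀ := mem_ball.1 ha
  -- rewrite the Morrey norm
  have hpt : ∀ y : EuclideanSpace ℝ (Fin n),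
      ENNReal.ofReal (|(Metric.ball x₀ r₀).indicator 1 y| ^ p * ‖y - a‖ ^ ν)
        = (Metric.ball x₀ r₀).indicator W y := by
    intro y
    by_cases hy : y ∈ Metric.ball x₀ r₀
    · rw [Set.indicator_of_mem hy, Set.indicator_of_mem hy]
      simp [Real.one_rpow, hWdef]
    · rw [Set.indicator_of_notMem hy, Set.indicator_of_notMem hy]
      simp [Real.zero_rpow hp0.ne']
  have hJ : ∀ (x : EuclideanSpace ℝ (Fin n)) (r : ℝ),
      (∫⁻ y in Metric.ball x r,
        ENNReal.ofReal (|(Metric.ball x₀ r₀).indicator 1 y| ^ p * ‖y - a‖ ^ ν))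
        = ∫⁻ y in Metric.ball x₀ r₀ ∩ Metric.ball x r, W y := by
    intro x r
    simp only [hpt]
    rw [lintegral_indicator measurableSet_ball, Measure.restrict_restrict measurableSet_ball]
  have hmorrey : morreyNorm p lam (fun y => ‖y - a‖ ^ ν) ((Metric.ball x₀ r₀).indicator 1)
      = ⨆ (x : EuclideanSpace ℝ (Fin n)) (r : ℝ) (_ : 0 < r),
        ((volume (Metric.ball x r)) ^ (-lam)
          * ∫⁻ y in Metric.ball x₀ r₀ ∩ Metric.ball x r, W y) ^ (1/p) := by
    rw [morreyNorm]
    exact iSup_congr fun x => iSup_congr fun r => iSup_congr fun hr => by rw [hJ]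
  have hvl_ne_top : v ^ (-lam) ≠ ⊤ := rpow_neg_ne_top hv0 hvt lam
  constructor
  · -- finiteness implies the exponent inequality
    intro hfin
    rw [hmorrey] at hfin
    by_contra hcon
    push_neg at hcon
    set e : ℝ := (n:ℝ) + ν - (n:ℝ)*lam with hedef
    have he : e < 0 := by simp only [hedef]; linarith
    set c : ENNReal := v ^ (-lam) * I1 n ν with hcdef
    have hc0 : c ≠ 0 :=
      mul_ne_zero (ENNReal.rpow_pos (pos_iff_ne_zero.2 hv0) hvt).ne' hI10
    have hct : c ≠ ⊤ := ENNReal.mul_ne_top hvl_ne_top hI1t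
    set S := ⨆ (x : EuclideanSpace ℝ (Fin n)) (r : ℝ) (_ : 0 < r),
        ((volume (Metric.ball x r)) ^ (-lam)
          * ∫⁻ y in Metric.ball x₀ r₀ ∩ Metric.ball x r, W y) ^ (1/p) with hSdef
    set M : ENNReal := S ^ p with hMdef
    have hMt : M ≠ ⊤ := (ENNReal.rpow_lt_top_of_nonneg hp0.le hfin.ne).ne
    set δ : ℝ := r₀ - dist a x₀ with hδdef
    have hδ : 0 < δ := by simp only [hδdef]; linarith
    have hQ : ∀ r : ℝ, 0 < r → r ≤ δ → ENNReal.ofReal (r ^ e) * c ≤ M := by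
      intro r hr hrδ
      have hsub : Metric.ball a r ⊆ Metric.ball x₀ r₀ := by
        intro y hy
        have h1 : dist y a < r := mem_ball.1 hy
        have h2 : dist y x₀ ≤ dist y a + dist a x₀ := dist_triangle y a x₀
        have : dist y x₀ < r₀ := by
          have : dist a x₀ = r₀ - δ := by simp only [hδdef]; ring
          rw [this] at h2; linarith
        exact mem_ball.2 this
      have hinter : Metric.ball x₀ r₀ ∩ Metric.ball a r = Metric.ball a r :=
        inter_eq_right.2 hsub
      have hQeq : (volume (Metric.ball a r)) ^ (-lam)
            * (∫⁻ y in Metric.ball x₀ r₀ ∩ Metric.ball a r, W y)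
          = ENNReal.ofReal (r ^ e) * c := by
        rw [hinter, hWdef, lint_ball_scale ν a hr, vol_ball hn a hr.le, ← hvdef, hcdef,
          alg1 n hr lam ((n:ℝ) + ν) hvt (I1 n ν)]
      have hterm : ((volume (Metric.ball a r)) ^ (-lam)
            * (∫⁻ y in Metric.ball x₀ r₀ ∩ Metric.ball a r, W y)) ^ (1/p) ≤ S :=
        le_iSup_of_le a (le_iSup_of_le r (le_iSup_of_le hr le_rfl))
      have hQle : (volume (Metric.ball a r)) ^ (-lam)
            * (∫⁻ y in Metric.ball x₀ r₀ ∩ Metric.ball a r, W y) ≤ M := by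
        have h1 := ENNReal.rpow_le_rpow hterm hp0.le
        rwa [← ENNReal.rpow_mul, one_div_mul_cancel hp0.ne', ENNReal.rpow_one] at h1
      rw [← hQeq]
      exact hQle
    set M' : ENNReal := M / c with hM'def
    have hM't : M' ≠ ⊤ := (ENNReal.div_lt_top hMt hc0).ne
    have hr' : ∀ r : ℝ, 0 < r → r ≤ δ → ENNReal.ofReal (r ^ e) ≤ M' := by
      intro r hr hrδ
      rw [hM'def]
      exact ENNReal.le_div_iff_mul_le (Or.inl hc0) (Or.inl hct) |>.2 (hQ r hr hrδ)
    set T : ℝ := M'.toReal + 1 with hTdef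
    have hT0 : (0:ℝ) < T := by positivity
    have hTe : (0:ℝ) < T ^ (1/e) := Real.rpow_pos_of_pos hT0 _
    set r : ℝ := min δ (T ^ (1/e) / 2) with hrdef
    have hr0 : 0 < r := lt_min hδ (by positivity)
    have hrlt : r < T ^ (1/e) :=
      lt_of_le_of_lt (min_le_right _ _) (by linarith)
    have hre : T < r ^ e := by
      have h1 : (T ^ (1/e)) ^ e < r ^ e := Real.rpow_lt_rpow_of_neg hr0 hrlt he
      rwa [← Real.rpow_mul hT0.le, one_div_mul_cancel (ne_of_lt he), Real.rpow_one] at h1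
    have hlt : M' < ENNReal.ofReal (r ^ e) := by
      refine lt_of_lt_of_le ((ENNReal.lt_ofReal_iff_toReal_lt hM't).2 ?_)
        (ENNReal.ofReal_le_ofReal hre.le)
      simp only [hTdef]; linarith
    exact absurd (hr' r hr0 (min_le_left _ _)) (not_le.2 hlt)
  · -- the exponent inequality implies finiteness
    intro hge
    set e : ℝ := (n:ℝ) + ν - (n:ℝ)*lam with hedef
    have he : 0 ≤ e := by simp only [hedef]; linarith
    set Cmax : ENNReal := ENNReal.ofReal (max 1 (r₀ ^ e)) with hCmax
    set C1 : ENNReal := (ENNReal.ofReal (r₀ ^ (n:ℝ)) * v) ^ (-lam)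
        * (ENNReal.ofReal ((2*r₀) ^ ((n:ℝ) + ν)) * I1 n ν) with hC1def
    set C2 : ENNReal := Cmax * (v ^ (-lam)
        * (ENNReal.ofReal ((3:ℝ) ^ ((n:ℝ) + ν)) * I1 n ν)) with hC2def
    set C3 : ENNReal := Cmax * (v ^ (-lam) * v) with hC3def
    set C4 : ENNReal := ENNReal.ofReal (max 1 (r₀ ^ ((n:ℝ) - (n:ℝ)*lam)))
        * (v ^ (-lam) * (ENNReal.ofReal ((2*r₀) ^ ν) * v)) with hC4def
    set C : ENNReal := max (max C1 C2) (max C3 C4) with hCdef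
    have hC1C : C1 ≤ C := le_trans (le_max_left C1 C2) (le_max_left _ _)
    have hC2C : C2 ≤ C := le_trans (le_max_right C1 C2) (le_max_left _ _)
    have hC3C : C3 ≤ C := le_trans (le_max_left C3 C4) (le_max_right _ _)
    have hC4C : C4 ≤ C := le_trans (le_max_right C3 C4) (le_max_right _ _)
    have hCt : C ≠ ⊤ := by
      have h1 : C1 ≠ ⊤ := by
        refine ENNReal.mul_ne_top ?_ (ENNReal.mul_ne_top ENNReal.ofReal_ne_top hI1t)
        refine rpow_neg_ne_top ?_ (ENNReal.mul_ne_top ENNReal.ofReal_ne_top hvt) lam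
        exact mul_ne_zero (ENNReal.ofReal_pos.2 (Real.rpow_pos_of_pos hr₀ _)).ne' hv0
      have h2 : C2 ≠ ⊤ := ENNReal.mul_ne_top ENNReal.ofReal_ne_top
        (ENNReal.mul_ne_top hvl_ne_top (ENNReal.mul_ne_top ENNReal.ofReal_ne_top hI1t))
      have h3 : C3 ≠ ⊤ := ENNReal.mul_ne_top ENNReal.ofReal_ne_top
        (ENNReal.mul_ne_top hvl_ne_top hvt)
      have h4 : C4 ≠ ⊤ := ENNReal.mul_ne_top ENNReal.ofReal_ne_top
        (ENNReal.mul_ne_top hvl_ne_top (ENNReal.mul_ne_top ENNReal.ofReal_ne_top hvt))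
      have hClt : C < ⊤ := by
        rw [hCdef]
        exact max_lt (max_lt h1.lt_top h2.lt_top) (max_lt h3.lt_top h4.lt_top)
      exact hClt.ne
    have hbound : ∀ (x : EuclideanSpace ℝ (Fin n)) (r : ℝ), 0 < r →
        (volume (Metric.ball x r)) ^ (-lam)
          * (∫⁻ y in Metric.ball x₀ r₀ ∩ Metric.ball x r, W y) ≤ C := by
      intro x r hr
      rcases le_or_gt r₀ r with hcase | hcase
      · -- large radius
        have h1 : (volume (Metric.ball x r)) ^ (-lam)
            ≤ (ENNReal.ofReal (r₀ ^ (n:ℝ)) * v) ^ (-lam) := by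
          rw [ENNReal.rpow_neg, ENNReal.rpow_neg]
          refine ENNReal.inv_le_inv.2 (ENNReal.rpow_le_rpow ?_ hlam0)
          rw [hvdef, ← vol_ball hn x hr₀.le]
          exact measure_mono (Metric.ball_subset_ball hcase)
        have h2 : (∫⁻ y in Metric.ball x₀ r₀ ∩ Metric.ball x r, W y)
            ≤ ENNReal.ofReal ((2*r₀) ^ ((n:ℝ)+ν)) * I1 n ν := by
          simp only [hWdef]
          rw [← lint_ball_scale ν a (show (0:ℝ) < 2*r₀ by linarith)]
          refine lintegral_mono_set ?_
          intro y hy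
          have h3 : dist y x₀ < r₀ := mem_ball.1 hy.1
          have h5 : dist x₀ a < r₀ := by rw [dist_comm]; exact hax₀
          have h4 : dist y a ≤ dist y x₀ + dist x₀ a := dist_triangle y x₀ a
          exact mem_ball.2 (by linarith)
        exact le_trans (mul_le_mul' h1 h2) hC1C
      · rcases le_or_gt 0 ν with hν0 | hν0
        · -- ν ≥ 0, small radius
          have h2 : (∫⁻ y in Metric.ball x₀ r₀ ∩ Metric.ball x r, W y)
              ≤ ENNReal.ofReal ((2*r₀) ^ ν) * volume (Metric.ball x r) := by
            calc (∫⁻ y in Metric.ball x₀ r₀ ∩ Metric.ball x r, W y)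
                ≤ ∫⁻ _ in Metric.ball x₀ r₀ ∩ Metric.ball x r,
                    ENNReal.ofReal ((2*r₀) ^ ν) := by
                  refine setLIntegral_mono measurable_const ?_
                  intro y hy
                  have h3 : dist y x₀ < r₀ := mem_ball.1 hy.1
                  have h5 : dist x₀ a < r₀ := by rw [dist_comm]; exact hax₀
                  have h6 : ‖y - a‖ < 2*r₀ := by
                    rw [← dist_eq_norm]
                    calc dist y a ≤ dist y x₀ + dist x₀ a := dist_triangle y x₀ a
                      _ < 2*r₀ := by linarith
                  exact ENNReal.ofReal_le_ofReal
                    (Real.rpow_le_rpow (norm_nonneg _) h6.le hν0)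
              _ = ENNReal.ofReal ((2*r₀) ^ ν)
                    * volume (Metric.ball x₀ r₀ ∩ Metric.ball x r) :=
                  setLIntegral_const _ _
              _ ≤ ENNReal.ofReal ((2*r₀) ^ ν) * volume (Metric.ball x r) := by
                  gcongr
                  exact inter_subset_right
          have h7 : (volume (Metric.ball x r)) ^ (-lam)
                * (∫⁻ y in Metric.ball x₀ r₀ ∩ Metric.ball x r, W y)
              ≤ ENNReal.ofReal (r ^ ((n:ℝ) - (n:ℝ)*lam))
                * (v ^ (-lam) * (ENNReal.ofReal ((2*r₀) ^ ν) * v)) := by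
            refine le_trans (mul_le_mul' le_rfl h2) (le_of_eq ?_)
            rw [vol_ball hn x hr.le, ← hvdef]
            rw [show ENNReal.ofReal ((2*r₀) ^ ν) * (ENNReal.ofReal (r ^ (n:ℝ)) * v)
                = ENNReal.ofReal (r ^ (n:ℝ)) * (ENNReal.ofReal ((2*r₀) ^ ν) * v) by ring]
            exact alg1 n hr lam ((n:ℝ)) hvt _
          refine le_trans h7 (le_trans ?_ hC4C)
          rw [hC4def]
          gcongr
          refine pow_bound hr hcase ?_
          nlinarith [Nat.cast_nonneg (α := ℝ) n]
        · rcases le_or_gt (dist x a) (2*r) with hdist | hdist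
          · -- near a
            have h2 : (∫⁻ y in Metric.ball x₀ r₀ ∩ Metric.ball x r, W y)
                ≤ ENNReal.ofReal (r ^ ((n:ℝ)+ν))
                  * (ENNReal.ofReal ((3:ℝ) ^ ((n:ℝ)+ν)) * I1 n ν) := by
              have h3 : (∫⁻ y in Metric.ball x₀ r₀ ∩ Metric.ball x r, W y)
                  ≤ ∫⁻ y in Metric.ball a (3*r), W y := by
                refine lintegral_mono_set ?_
                intro y hy
                have h4 : dist y x < r := mem_ball.1 hy.2
                have h5 : dist y a ≤ dist y x + dist x a := dist_triangle y x a
                exact mem_ball.2 (by linarith)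
              simp only [hWdef] at h3
              rw [lint_ball_scale ν a (show (0:ℝ) < 3*r by linarith)] at h3
              refine le_trans h3 (le_of_eq ?_)
              rw [Real.mul_rpow (by norm_num : (0:ℝ) ≤ 3) hr.le,
                ENNReal.ofReal_mul (Real.rpow_nonneg (by norm_num) _),
                mul_comm (ENNReal.ofReal ((3:ℝ) ^ ((n:ℝ)+ν))) _, mul_assoc]
            have h7 : (volume (Metric.ball x r)) ^ (-lam)
                  * (∫⁻ y in Metric.ball x₀ r₀ ∩ Metric.ball x r, W y)
                ≤ ENNReal.ofReal (r ^ ((n:ℝ) + ν - (n:ℝ)*lam))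
                  * (v ^ (-lam) * (ENNReal.ofReal ((3:ℝ) ^ ((n:ℝ)+ν)) * I1 n ν)) := by
              refine le_trans (mul_le_mul' le_rfl h2) (le_of_eq ?_)
              rw [vol_ball hn x hr.le, ← hvdef]
              exact alg1 n hr lam ((n:ℝ) + ν) hvt _
            refine le_trans h7 (le_trans ?_ hC2C)
            rw [hC2def, hCmax]
            gcongr
            exact pow_bound hr hcase he
          · -- far from a, ν < 0
            have h2 : (∫⁻ y in Metric.ball x₀ r₀ ∩ Metric.ball x r, W y)
                ≤ ENNReal.ofReal (r ^ ((n:ℝ)+ν)) * v := by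
              calc (∫⁻ y in Metric.ball x₀ r₀ ∩ Metric.ball x r, W y)
                  ≤ ∫⁻ _ in Metric.ball x₀ r₀ ∩ Metric.ball x r,
                      ENNReal.ofReal (r ^ ν) := by
                    refine setLIntegral_mono measurable_const ?_
                    intro y hy
                    have h4 : dist y x < r := mem_ball.1 hy.2
                    have h5 : dist x a ≤ dist x y + dist y a := dist_triangle x y a
                    have h6 : r < ‖y - a‖ := by
                      rw [← dist_eq_norm]
                      rw [dist_comm y x] at h4
                      linarith
                    exact ENNReal.ofReal_le_ofReal
                      (Real.rpow_le_rpow_of_nonpos hr h6.le hν0.le)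
                _ = ENNReal.ofReal (r ^ ν)
                      * volume (Metric.ball x₀ r₀ ∩ Metric.ball x r) :=
                    setLIntegral_const _ _
                _ ≤ ENNReal.ofReal (r ^ ν) * volume (Metric.ball x r) := by
                    gcongr
                    exact inter_subset_right
                _ = ENNReal.ofReal (r ^ ((n:ℝ)+ν)) * v := by
                    rw [vol_ball hn x hr.le, ← hvdef, ← mul_assoc,
                      ← ENNReal.ofReal_mul (Real.rpow_nonneg hr.le _),
                      ← Real.rpow_add hr, add_comm ν ((n:ℝ))]
            have h7 : (volume (Metric.ball x r)) ^ (-lam)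
                  * (∫⁻ y in Metric.ball x₀ r₀ ∩ Metric.ball x r, W y)
                ≤ ENNReal.ofReal (r ^ ((n:ℝ) + ν - (n:ℝ)*lam))
                  * (v ^ (-lam) * v) := by
              refine le_trans (mul_le_mul' le_rfl h2) (le_of_eq ?_)
              rw [vol_ball hn x hr.le, ← hvdef]
              exact alg1 n hr lam ((n:ℝ) + ν) hvt _
            refine le_trans h7 (le_trans ?_ hC3C)
            rw [hC3def, hCmax]
            gcongr
            exact pow_bound hr hcase he
    rw [hmorrey]
    have hfin : C ^ (1/p) < ⊤ :=
      ENNReal.rpow_lt_top_of_nonneg (by positivity) hCt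
    refine lt_of_le_of_lt ?_ hfin
    refine iSup_le fun x => iSup_le fun r => iSup_le fun hr => ?_
    exact ENNReal.rpow_le_rpow (hbound x r hr) (by positivity)
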